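/- If A is a nonsingular n×n matrix, y, z ∈ {±1}ⁿ, and the matrix A⁻¹ D_y Δ D_z has a positive real eigenvalue λ > 0, then the interval matrix [A − (1/λ)Δ, A + (1/λ)Δ] contains the singular matrix A − (1/λ) D_y Δ D_z; in particular d(A, Δ) ≤ 1/λ. -/
import Mathlib


open Matrix
open scoped ENNReal NNReal

noncomputable def regRad {n : ℕ} (A Δ : Matrix (Fin n) (Fin n) ℝ) : ℝ≥0∞ :=
  ⨅ δ ∈ {δ : ℝ≥0 | ∃ M : Matrix (Fin n) (Fin n) ℝ,
      (∀ i j, |M i j - A i j| ≤ (δ : ℝ) * Δ i j) ∧ M.det = 0},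
    (δ : ℝ≥0∞)

theorem regRad_le_inv_eigenvalue {n : ℕ} (A Δ : Matrix (Fin n) (Fin n) ℝ)
    (hA : A.det ≠ 0) (hΔ : ∀ i j, 0 ≤ Δ i j)
    (y z : Fin n → ℝ) (hy : ∀ i, y i = 1 ∨ y i = -1) (hz : ∀ i, z i = 1 ∨ z i = -1)
    (lam : ℝ) (hlam : 0 < lam)
    (heig : lam ∈ spectrum ℝ (A⁻¹ * (Matrix.diagonal y * Δ * Matrix.diagonal z))) :
    ((A - (1 / lam) • (Matrix.diagonal y * Δ * Matrix.diagonal z)).det = 0 ∧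
      (∀ i j, |(A - (1 / lam) • (Matrix.diagonal y * Δ * Matrix.diagonal z)) i j - A i j|
        ≤ (1 / lam) * Δ i j)) ∧
    regRad A Δ ≤ ENNReal.ofReal (1 / lam) := by
  set M := Matrix.diagonal y * Δ * Matrix.diagonal z with hM
  have hAunit : IsUnit A := (Matrix.isUnit_iff_isUnit_det A).2 (isUnit_iff_ne_zero.2 hA)
  -- determinant zero
  have hdet0 : (lam • (1 : Matrix (Fin n) (Fin n) ℝ) - A⁻¹ * M).det = 0 := by
    rw [spectrum.mem_iff] at heig
    by_contra h
    exact heig ((Matrix.isUnit_iff_isUnit_det _).2 (isUnit_iff_ne_zero.2 (by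
      simpa [Algebra.algebraMap_eq_smul_one] using h)))
  have hfact : A - (1 / lam) • M = (1 / lam) • (A * (lam • (1 : Matrix (Fin n) (Fin n) ℝ) - A⁻¹ * M)) := by
    rw [Matrix.mul_sub, Matrix.mul_smul, mul_one, ← Matrix.mul_assoc,
      Matrix.mul_nonsing_inv A (isUnit_iff_ne_zero.2 hA), Matrix.one_mul, smul_sub, smul_smul,
      one_div_mul_cancel hlam.ne', one_smul]
  have hdet : (A - (1 / lam) • M).det = 0 := by
    rw [hfact, Matrix.det_smul, Matrix.det_mul, hdet0, mul_zero, mul_zero]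
  have hbound : ∀ i j, |(A - (1 / lam) • M) i j - A i j| ≤ (1 / lam) * Δ i j := by
    intro i j
    have hMij : M i j = y i * Δ i j * z j := by
      simp [hM, Matrix.mul_apply, Matrix.diagonal, Finset.sum_eq_single i,
        Finset.sum_eq_single j]
    have habs : |M i j| = Δ i j := by
      rw [hMij, abs_mul, abs_mul]
      rcases hy i with h1 | h1 <;> rcases hz j with h2 | h2 <;>
        simp [h1, h2, abs_of_nonneg (hΔ i j)]
    have : (A - (1 / lam) • M) i j - A i j = -((1 / lam) * M i j) := by
      simp only [Matrix.sub_apply, Matrix.smul_apply, smul_eq_mul]; ring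
    rw [this, abs_neg, abs_mul, habs, abs_of_pos (by positivity)]
  refine ⟨⟨hdet, hbound⟩, ?_⟩
  set δ₀ : ℝ≥0 := ⟨1 / lam, by positivity⟩ with hδ₀
  have hmem : δ₀ ∈ {δ : ℝ≥0 | ∃ M : Matrix (Fin n) (Fin n) ℝ,
      (∀ i j, |M i j - A i j| ≤ (δ : ℝ) * Δ i j) ∧ M.det = 0} :=
    ⟨A - (1 / lam) • M, hbound, hdet⟩
  calc regRad A Δ ≤ (δ₀ : ℝ≥0∞) := biInf_le _ hmem
    _ = ENNReal.ofReal (1 / lam) :=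
        (ENNReal.ofReal_eq_coe_nnreal (by positivity : (0:ℝ) ≤ 1 / lam)).symm
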